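/- Let A be the subalgebra of 3×3 complex matrices of the form [[a,b,c],[0,a,d],[0,0,a]], X = E₂₃, δ(M) = MX, τ(M) = XM. Then there exists no linear map γ : A → A such that γ(MN) = δ(M)N + Mτ(N) for all M, N ∈ A. -/

import Mathlib

open Matrix

/-- The unital ℂ-subalgebra of M₃(ℂ) of matrices [[a,b,c],[0,a,d],[0,0,a]]. -/
def UT3 : Subalgebra ℂ (Matrix (Fin 3) (Fin 3) ℂ) where
  carrier := {M | M 1 0 = 0 ∧ M 2 0 = 0 ∧ M 2 1 = 0 ∧ M 0 0 = M 1 1 ∧ M 1 1 = M 2 2}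
  mul_mem' := by
    rintro M N ⟨h1, h2, h3, h4, h5⟩ ⟨k1, k2, k3, k4, k5⟩
    refine ⟨?_, ?_, ?_, ?_, ?_⟩ <;>
      simp only [Matrix.mul_apply, Fin.sum_univ_three, h1, h2, h3, h4, h5, k1, k2, k3, k4, k5] <;>
      ring
  add_mem' := by
    rintro M N ⟨h1, h2, h3, h4, h5⟩ ⟨k1, k2, k3, k4, k5⟩
    refine ⟨?_, ?_, ?_, ?_, ?_⟩ <;>
      simp only [Matrix.add_apply, h1, h2, h3, h4, h5, k1, k2, k3, k4, k5] <;> ring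
  one_mem' := by
    refine ⟨?_, ?_, ?_, ?_, ?_⟩ <;> simp [Matrix.one_apply]
  zero_mem' := by
    refine ⟨?_, ?_, ?_, ?_, ?_⟩ <;> simp
  algebraMap_mem' := by
    intro r
    refine ⟨?_, ?_, ?_, ?_, ?_⟩ <;>
      simp [Matrix.algebraMap_matrix_apply]

/-- with X = E₂₃, δ(M) = MX, τ(N) = XN on the algebra UT3, there is no
ℂ-linear map γ : UT3 → UT3 such that γ(MN) = δ(M)N + Mτ(N) for all M, N ∈ UT3. -/
theorem stmt3 :
    ¬ ∃ γ : UT3 →ₗ[ℂ] UT3, ∀ M N : UT3,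
      (γ (M * N) : Matrix (Fin 3) (Fin 3) ℂ) =
        ((M : Matrix (Fin 3) (Fin 3) ℂ) * Matrix.single 1 2 (1 : ℂ))
            * (N : Matrix (Fin 3) (Fin 3) ℂ)
          + (M : Matrix (Fin 3) (Fin 3) ℂ)
            * (Matrix.single 1 2 (1 : ℂ) * (N : Matrix (Fin 3) (Fin 3) ℂ)) := by
  rintro ⟨γ, h⟩
  have hM : Matrix.single (0 : Fin 3) 1 (1 : ℂ) ∈ UT3 := by
    refine ⟨?_, ?_, ?_, ?_, ?_⟩ <;> simp [Matrix.single]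
  set Me : UT3 := ⟨Matrix.single (0 : Fin 3) 1 (1 : ℂ), hM⟩
  have h1 := h Me 1
  have h2 := h 1 Me
  rw [mul_one] at h1
  rw [one_mul] at h2
  have := h1.symm.trans h2
  have := congrFun (congrFun this 0) 2
  simp [Matrix.mul_apply, Fin.sum_univ_three, Matrix.single, Matrix.one_apply, Me] at this
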